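/- Let X be a nonempty type, Z = X × {0,1}, and let λ = (λ₀, λ₁) be a binary loss function that is proper and η-mixable for some η > 0, with λ₀ and λ₁ continuous on [0,1]. Let F : Z* × X → (0,1) be a prediction strategy and let L be a superloss process under λ such that Loss^λ_F is finite on all finite sequences. Then the function σ ↦ η·L(σ) + Loss^ln_F(σ) − η·Loss^λ_F(σ) is a superloss process under the log loss function. -/

import Mathlib

open Set

/-- `e^{-c}` for `c ∈ [0,∞]`, with the convention `e^{-∞} = 0`. -/
noncomputable def expNeg (c : ENNReal) : ℝ :=
  if c = ⊤ then 0 else Real.exp (-c.toReal)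

/-- A loss function as a map `[0,1] × {0,1} → [0,∞]`; `lam p true` is `λ₁(p)` and
`lam p false` is `λ₀(p)`. -/
structure IsLossFunction (lam : ℝ → Bool → ENNReal) : Prop where
  zero0 : lam 0 false = 0
  zero1 : lam 1 true = 0
  mono0 : MonotoneOn (fun p => lam p false) (Icc 0 1)
  anti1 : AntitoneOn (fun p => lam p true) (Icc 0 1)
  finite0 : ∀ p ∈ Ioo (0:ℝ) 1, lam p false ≠ ⊤
  finite1 : ∀ p ∈ Ioo (0:ℝ) 1, lam p true ≠ ⊤

def IsProper (lam : ℝ → Bool → ENNReal) : Prop :=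
  ∀ p ∈ Icc (0:ℝ) 1, ∀ q ∈ Icc (0:ℝ) 1,
    ENNReal.ofReal p * lam p true + ENNReal.ofReal (1 - p) * lam p false ≤
      ENNReal.ofReal p * lam q true + ENNReal.ofReal (1 - p) * lam q false

def IsMixable (lam : ℝ → Bool → ENNReal) (η : ℝ) : Prop :=
  Convex ℝ {x : ℝ × ℝ | x.1 ∈ Icc (0:ℝ) 1 ∧ x.2 ∈ Icc (0:ℝ) 1 ∧
    ∃ p ∈ Icc (0:ℝ) 1,
      x.1 ≤ expNeg (ENNReal.ofReal η * lam p false) ∧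
      x.2 ≤ expNeg (ENNReal.ofReal η * lam p true)}

/-- The log loss function, with `-ln 0 = ∞`. -/
noncomputable def logLoss : ℝ → Bool → ENNReal := fun p y =>
  if y then (if p = 0 then ⊤ else ENNReal.ofReal (-Real.log p))
  else (if p = 1 then ⊤ else ENNReal.ofReal (-Real.log (1 - p)))

/-- The cumulative loss `Loss^λ_F(z₁…z_T) = Σ_t λ(F(z₁…z_{t-1}, x_t), y_t)` of a
prediction strategy `F` on a finite data sequence, as an extended real. -/
noncomputable def cumLoss {X : Type*} (lam : ℝ → Bool → ENNReal)
    (F : List (X × Bool) → X → ℝ) (σ : List (X × Bool)) : EReal :=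
  ∑ i : Fin σ.length, ((lam (F (σ.take i) (σ.get i).1) (σ.get i).2 : ENNReal) : EReal)

/-- `L : Z* → ℝ ∪ {∞}` is a superloss process under `lam`. -/
def IsSuperlossProcess {X : Type*} (lam : ℝ → Bool → ENNReal)
    (L : List (X × Bool) → EReal) : Prop :=
  L [] = 0 ∧ ∀ σ : List (X × Bool), ∀ x : X, ∃ p ∈ Icc (0:ℝ) 1, ∀ y : Bool,
    L (σ ++ [(x, y)]) ≥ L σ + (lam p y : EReal)

section Aux

theorem logOneAdd_ge (x : ℝ) (hx : -(1/2) ≤ x) : x - 2*x^2 ≤ Real.log (1+x) := by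
  have h1 : (0:ℝ) < 1 + x := by linarith
  have h2 : Real.log (1+x)⁻¹ ≤ (1+x)⁻¹ - 1 := Real.log_le_sub_one_of_pos (by positivity)
  rw [Real.log_inv] at h2
  have h3 : x/(1+x) ≤ Real.log (1+x) := by
    have h5 : (1+x)⁻¹ - 1 = -(x/(1+x)) := by field_simp; ring
    linarith [h2, h5.le]
  have h4 : x - 2*x^2 ≤ x/(1+x) := by
    rw [le_div_iff₀ h1]; nlinarith
  linarith

theorem expNeg_nonneg' (c : ENNReal) : 0 ≤ expNeg c := by
  unfold expNeg; split
  · exact le_refl _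
  · exact (Real.exp_pos _).le

theorem expNeg_le_one' (c : ENNReal) : expNeg c ≤ 1 := by
  unfold expNeg; split
  · norm_num
  · exact Real.exp_le_one_iff.mpr (by simp [ENNReal.toReal_nonneg])

theorem expNeg_of_ne_top' {c : ENNReal} (h : c ≠ ⊤) : expNeg c = Real.exp (-c.toReal) := by
  simp [expNeg, h]

theorem ne_top_of_expNeg_pos' {c : ENNReal} (h : 0 < expNeg c) : c ≠ ⊤ := by
  intro hc; simp [expNeg, hc] at h

theorem expNeg_eta {η : ℝ} (hη : 0 < η) {c : ENNReal} (h : c ≠ ⊤) :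
    expNeg (ENNReal.ofReal η * c) = Real.exp (-(η * c.toReal)) := by
  rw [expNeg_of_ne_top' (by finiteness), ENNReal.toReal_mul, ENNReal.toReal_ofReal hη.le]

theorem lam_ne_top_of_expNeg_pos {η : ℝ} (hη : 0 < η) {c : ENNReal}
    (h : 0 < expNeg (ENNReal.ofReal η * c)) : c ≠ ⊤ := by
  intro hc
  have := ne_top_of_expNeg_pos' h
  rw [hc, ENNReal.mul_top (by simp [ENNReal.ofReal_eq_zero, hη.not_ge])] at this
  exact this rfl

theorem coe_real_sum {α : Type*} (s : Finset α) (r : α → ℝ) :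
    ((∑ i ∈ s, r i : ℝ) : EReal) = ∑ i ∈ s, ((r i : ℝ) : EReal) :=
  map_sum (⟨⟨Real.toEReal, EReal.coe_zero⟩, EReal.coe_add⟩ : ℝ →+ EReal) r s

theorem ennreal_coe_eq_coe_toReal {x : ENNReal} (h : x ≠ ⊤) :
    (x : EReal) = ((x.toReal : ℝ) : EReal) := by
  rw [← EReal.toReal_coe_ennreal (x := x)]
  exact (EReal.coe_toReal (by simpa [EReal.coe_ennreal_eq_top_iff] using h)
    (EReal.coe_ennreal_ne_bot x)).symm

theorem cumLoss_append {X : Type*} (lam : ℝ → Bool → ENNReal)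
    (F : List (X × Bool) → X → ℝ) (σ : List (X × Bool)) (z : X × Bool) :
    cumLoss lam F (σ ++ [z]) = cumLoss lam F σ + ((lam (F σ z.1) z.2 : ENNReal) : EReal) := by
  unfold cumLoss
  have h : (σ ++ [z]).length = σ.length + 1 := by simp
  rw [← Fin.sum_congr' _ h.symm, Fin.sum_univ_castSucc]
  congr 1
  · apply Finset.sum_congr rfl
    intro i _
    have hi : (i : ℕ) < σ.length := i.isLt
    have e1 : (σ ++ [z])[(i:ℕ)]'(by simp) = σ[(i:ℕ)] := List.getElem_append_left hi
    simp only [Fin.coe_cast, Fin.coe_castSucc, List.get_eq_getElem, e1,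
      List.take_append_of_le_length hi.le]
  · have h1 : (σ ++ [z]).take σ.length = σ := by
      simp [List.take_append_of_le_length le_rfl]
    have h2 : (σ ++ [z]).get (Fin.cast h.symm (Fin.last σ.length)) = z := by
      simp [List.getElem_append_right]
    simp [h1, h2]

theorem cumLoss_eq_coe {X : Type*} (lam : ℝ → Bool → ENNReal)
    (F : List (X × Bool) → X → ℝ) (σ : List (X × Bool))
    (h : ∀ τ (x : X) y, lam (F τ x) y ≠ ⊤) :
    ∃ r : ℝ, 0 ≤ r ∧ cumLoss lam F σ = (r : EReal) := by
  refine ⟨∑ i : Fin σ.length, (lam (F (σ.take i) (σ.get i).1) (σ.get i).2).toReal, ?_, ?_⟩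
  · exact Finset.sum_nonneg fun i _ => ENNReal.toReal_nonneg
  · unfold cumLoss
    rw [coe_real_sum]
    exact Finset.sum_congr rfl fun i _ => ennreal_coe_eq_coe_toReal (h _ _ _)

end Aux

theorem keyIneq (lam : ℝ → Bool → ENNReal) (η : ℝ) (hη : 0 < η)
    (hloss : IsLossFunction lam) (hproper : IsProper lam) (hmix : IsMixable lam η)
    {f : ℝ} (hf : f ∈ Ioo (0:ℝ) 1) {p : ℝ} (hp : p ∈ Icc (0:ℝ) 1) :
    f * expNeg (ENNReal.ofReal η * lam p true) / expNeg (ENNReal.ofReal η * lam f true)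
    + (1 - f) * expNeg (ENNReal.ofReal η * lam p false) / expNeg (ENNReal.ofReal η * lam f false)
      ≤ 1 := by
  have hfI : f ∈ Icc (0:ℝ) 1 := ⟨hf.1.le, hf.2.le⟩
  set a := expNeg (ENNReal.ofReal η * lam p false) with ha_def
  set b := expNeg (ENNReal.ofReal η * lam p true) with hb_def
  set A := expNeg (ENNReal.ofReal η * lam f false) with hA_def
  set B := expNeg (ENNReal.ofReal η * lam f true) with hB_def
  have hlf0 : lam f false ≠ ⊤ := hloss.finite0 f hf
  have hlf1 : lam f true ≠ ⊤ := hloss.finite1 f hf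
  set r0 := (lam f false).toReal with hr0_def
  set r1 := (lam f true).toReal with hr1_def
  have hAe : A = Real.exp (-(η * r0)) := expNeg_eta hη hlf0
  have hBe : B = Real.exp (-(η * r1)) := expNeg_eta hη hlf1
  have hApos : 0 < A := hAe ▸ Real.exp_pos _
  have hBpos : 0 < B := hBe ▸ Real.exp_pos _
  have ha0 : 0 ≤ a := expNeg_nonneg' _
  have hb0 : 0 ≤ b := expNeg_nonneg' _
  by_contra hcon
  push_neg at hcon
  set u : ℝ := (a - A)/A with hu_def
  set v : ℝ := (b - B)/B with hv_def
  set δ : ℝ := f*v + (1-f)*u with hδ_def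
  have hδeq : δ = f*(b/B) + (1-f)*(a/A) - 1 := by
    rw [hδ_def, hu_def, hv_def]; field_simp; ring
  have hδ : 0 < δ := by
    rw [hδeq]
    have e1 : f * b / B = f * (b/B) := by ring
    have e2 : (1-f) * a / A = (1-f) * (a/A) := by ring
    rw [e1, e2] at hcon
    linarith only [hcon]
  set C : ℝ := f*v^2 + (1-f)*u^2 with hC_def
  have hC : 0 ≤ C := by
    have h1 := mul_nonneg hf.1.le (sq_nonneg v)
    have h2 := mul_nonneg (by linarith [hf.2] : (0:ℝ) ≤ 1-f) (sq_nonneg u)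
    rw [hC_def]; linarith
  set t : ℝ := min (1/(2*(|u|+|v|+1))) (δ/(4*C+1)) with ht_def
  clear_value t C δ v u
  have habs : (0:ℝ) < |u|+|v|+1 := by positivity
  have ht0 : 0 < t := by
    rw [ht_def]
    apply lt_min
    · positivity
    · positivity
  have ht_half : t ≤ 1/(2*(|u|+|v|+1)) := ht_def ▸ min_le_left _ _
  have ht_delta : t ≤ δ/(4*C+1) := ht_def ▸ min_le_right _ _
  have htu_abs : |t*u| ≤ 1/2 := by
    rw [abs_mul, abs_of_pos ht0]
    calc t * |u| ≤ (1/(2*(|u|+|v|+1))) * |u| := by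
          apply mul_le_mul_of_nonneg_right ht_half (abs_nonneg _)
      _ ≤ 1/2 := by
          rw [div_mul_eq_mul_div, div_le_div_iff₀ (by positivity) (by norm_num)]
          linarith only [abs_nonneg u, abs_nonneg v]
  have htv_abs : |t*v| ≤ 1/2 := by
    rw [abs_mul, abs_of_pos ht0]
    calc t * |v| ≤ (1/(2*(|u|+|v|+1))) * |v| := by
          apply mul_le_mul_of_nonneg_right ht_half (abs_nonneg _)
      _ ≤ 1/2 := by
          rw [div_mul_eq_mul_div, div_le_div_iff₀ (by positivity) (by norm_num)]
          linarith only [abs_nonneg u, abs_nonneg v]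
  have htu_lb : -(1/2) ≤ t*u := neg_le_of_abs_le htu_abs
  have htv_lb : -(1/2) ≤ t*v := neg_le_of_abs_le htv_abs
  have ht1 : t < 1 := lt_of_le_of_lt ht_half (by
    rw [div_lt_one (by positivity)]
    linarith only [abs_nonneg u, abs_nonneg v])
  -- membership in the mixable set
  have hP1 : ((A, B) : ℝ × ℝ) ∈ {x : ℝ × ℝ | x.1 ∈ Icc (0:ℝ) 1 ∧ x.2 ∈ Icc (0:ℝ) 1 ∧
      ∃ q ∈ Icc (0:ℝ) 1, x.1 ≤ expNeg (ENNReal.ofReal η * lam q false) ∧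
        x.2 ≤ expNeg (ENNReal.ofReal η * lam q true)} :=
    ⟨⟨expNeg_nonneg' _, expNeg_le_one' _⟩, ⟨expNeg_nonneg' _, expNeg_le_one' _⟩,
      f, hfI, le_rfl, le_rfl⟩
  have hP2 : ((a, b) : ℝ × ℝ) ∈ {x : ℝ × ℝ | x.1 ∈ Icc (0:ℝ) 1 ∧ x.2 ∈ Icc (0:ℝ) 1 ∧
      ∃ q ∈ Icc (0:ℝ) 1, x.1 ≤ expNeg (ENNReal.ofReal η * lam q false) ∧
        x.2 ≤ expNeg (ENNReal.ofReal η * lam q true)} :=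
    ⟨⟨expNeg_nonneg' _, expNeg_le_one' _⟩, ⟨expNeg_nonneg' _, expNeg_le_one' _⟩,
      p, hp, le_rfl, le_rfl⟩
  have hconv := hmix hP1 hP2 (by linarith : (0:ℝ) ≤ 1 - t) ht0.le (by ring)
  have hpt : (1-t) • ((A, B) : ℝ × ℝ) + t • ((a, b) : ℝ × ℝ)
      = (((1-t)*A + t*a, (1-t)*B + t*b) : ℝ × ℝ) := by
    simp [Prod.ext_iff, smul_eq_mul]
  rw [hpt] at hconv
  obtain ⟨-, -, q, hq, hq0, hq1⟩ := hconv
  set At : ℝ := (1-t)*A + t*a with hAt_def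
  set Bt : ℝ := (1-t)*B + t*b with hBt_def
  have hAtpos : 0 < At := by
    have e1 : 0 < (1-t)*A := mul_pos (by linarith) hApos
    have e2 : 0 ≤ t*a := mul_nonneg ht0.le ha0
    rw [hAt_def]; linarith only [e1, e2]
  have hBtpos : 0 < Bt := by
    have e1 : 0 < (1-t)*B := mul_pos (by linarith) hBpos
    have e2 : 0 ≤ t*b := mul_nonneg ht0.le hb0
    rw [hBt_def]; linarith only [e1, e2]
  have hlq0 : lam q false ≠ ⊤ := lam_ne_top_of_expNeg_pos hη (lt_of_lt_of_le hAtpos hq0)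
  have hlq1 : lam q true ≠ ⊤ := lam_ne_top_of_expNeg_pos hη (lt_of_lt_of_le hBtpos hq1)
  set q0r := (lam q false).toReal with hq0r_def
  set q1r := (lam q true).toReal with hq1r_def
  rw [expNeg_eta hη hlq0] at hq0
  rw [expNeg_eta hη hlq1] at hq1
  have hlog0 : Real.log At ≤ -(η * q0r) := by
    calc Real.log At ≤ Real.log (Real.exp (-(η * q0r))) := Real.log_le_log hAtpos hq0
      _ = -(η * q0r) := Real.log_exp _
  have hlog1 : Real.log Bt ≤ -(η * q1r) := by
    calc Real.log Bt ≤ Real.log (Real.exp (-(η * q1r))) := Real.log_le_log hBtpos hq1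
      _ = -(η * q1r) := Real.log_exp _
  -- properness in reals
  have hprop := hproper f hfI q hq
  have hne1 : ENNReal.ofReal f * lam q true + ENNReal.ofReal (1-f) * lam q false ≠ ⊤ := by
    finiteness
  have hprR : f*r1 + (1-f)*r0 ≤ f*q1r + (1-f)*q0r := by
    have := ENNReal.toReal_mono hne1 hprop
    rw [ENNReal.toReal_add (by finiteness) (by finiteness),
        ENNReal.toReal_add (by finiteness) (by finiteness),
        ENNReal.toReal_mul, ENNReal.toReal_mul, ENNReal.toReal_mul, ENNReal.toReal_mul,
        ENNReal.toReal_ofReal hf.1.le, ENNReal.toReal_ofReal (by linarith [hf.2] : (0:ℝ) ≤ 1-f)]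
      at this
    exact this
  -- φ(t) ≤ φ(0)
  have hlogA : Real.log A = -(η * r0) := by rw [hAe, Real.log_exp]
  have hlogB : Real.log B = -(η * r1) := by rw [hBe, Real.log_exp]
  have hφ : f * Real.log Bt + (1-f) * Real.log At ≤ -(η*(f*r1 + (1-f)*r0)) := by
    have h1 : f * Real.log Bt ≤ f * (-(η * q1r)) :=
      mul_le_mul_of_nonneg_left hlog1 hf.1.le
    have h2 : (1-f) * Real.log At ≤ (1-f) * (-(η * q0r)) :=
      mul_le_mul_of_nonneg_left hlog0 (by linarith [hf.2])
    have h5 : η*(f*r1 + (1-f)*r0) ≤ η*(f*q1r + (1-f)*q0r) :=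
      mul_le_mul_of_nonneg_left hprR hη.le
    linarith only [h1, h2, h5]
  -- expand logs
  have hAtfac : At = A * (1 + t*u) := by
    rw [hAt_def, hu_def]; field_simp; ring
  have hBtfac : Bt = B * (1 + t*v) := by
    rw [hBt_def, hv_def]; field_simp; ring
  have h1tu : (0:ℝ) < 1 + t*u := by linarith
  have h1tv : (0:ℝ) < 1 + t*v := by linarith
  have hlogAt : Real.log At = Real.log A + Real.log (1 + t*u) := by
    rw [hAtfac, Real.log_mul hApos.ne' h1tu.ne']
  have hlogBt : Real.log Bt = Real.log B + Real.log (1 + t*v) := by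
    rw [hBtfac, Real.log_mul hBpos.ne' h1tv.ne']
  have hkey : f * Real.log (1 + t*v) + (1-f) * Real.log (1 + t*u) ≤ 0 := by
    rw [hlogAt, hlogBt, hlogA, hlogB] at hφ
    linarith only [hφ]
  have hlb1 : t*v - 2*(t*v)^2 ≤ Real.log (1 + t*v) := logOneAdd_ge _ htv_lb
  have hlb2 : t*u - 2*(t*u)^2 ≤ Real.log (1 + t*u) := logOneAdd_ge _ htu_lb
  -- derive contradiction
  have hfin : t*δ - 2*t^2*C ≤ 0 := by
    have e1 : f * (t*v - 2*(t*v)^2) + (1-f) * (t*u - 2*(t*u)^2) = t*δ - 2*t^2*C := by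
      rw [hδ_def, hC_def]; ring
    have e2 : f * (t*v - 2*(t*v)^2) ≤ f * Real.log (1 + t*v) :=
      mul_le_mul_of_nonneg_left hlb1 hf.1.le
    have e3 : (1-f) * (t*u - 2*(t*u)^2) ≤ (1-f) * Real.log (1 + t*u) :=
      mul_le_mul_of_nonneg_left hlb2 (by linarith [hf.2])
    linarith only [e1, e2, e3, hkey]
  have h2tC : 2*t*C ≤ δ/2 := by
    have h := (le_div_iff₀ (by positivity : (0:ℝ) < 4*C+1)).mp ht_delta
    linarith only [h, ht0, hC]
  have h6 : t*(2*t*C) ≤ t*(δ/2) := mul_le_mul_of_nonneg_left h2tC ht0.le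
  have h7 : 0 < t*δ := mul_pos ht0 hδ
  linarith only [hfin, h6, h7]

theorem cumLoss_append' {X : Type*} (lam : ℝ → Bool → ENNReal)
    (F : List (X × Bool) → X → ℝ) (σ : List (X × Bool)) (x : X) (y : Bool) :
    cumLoss lam F (σ ++ [(x, y)]) = cumLoss lam F σ + ((lam (F σ x) y : ENNReal) : EReal) :=
  cumLoss_append lam F σ (x, y)


set_option maxHeartbeats 400000 in
/-- If `lam` is a proper `η`-mixable loss function continuous on `[0,1]`, `F` is a
prediction strategy with values in `(0,1)`, and `L` is a superloss process under `lam`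
with `Loss^λ_F` finite, then `η·L + Loss^ln_F - η·Loss^λ_F` is a superloss process under
the log loss function. -/
theorem superloss_log_of_superloss {X : Type*} [Nonempty X]
    (lam : ℝ → Bool → ENNReal) (η : ℝ) (hη : 0 < η)
    (hloss : IsLossFunction lam) (hproper : IsProper lam) (hmix : IsMixable lam η)
    (hcont0 : ContinuousOn (fun p => lam p false) (Icc 0 1))
    (hcont1 : ContinuousOn (fun p => lam p true) (Icc 0 1))
    (F : List (X × Bool) → X → ℝ) (hF : ∀ σ x, F σ x ∈ Ioo (0:ℝ) 1)
    (L : List (X × Bool) → EReal) (hL : IsSuperlossProcess lam L)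
    (hfin : ∀ σ : List (X × Bool), cumLoss lam F σ ≠ ⊤) :
    IsSuperlossProcess logLoss
      (fun σ => (η : EReal) * L σ + cumLoss logLoss F σ - (η : EReal) * cumLoss lam F σ) := by
  obtain ⟨hL0, hLstep⟩ := hL
  have hLnn : ∀ σ : List (X × Bool), 0 ≤ L σ := by
    intro σ
    induction σ using List.reverseRecOn with
    | nil => rw [hL0]
    | append_singleton l z ih =>
      obtain ⟨p, hp, hy⟩ := hLstep l z.1
      have h1 := hy z.2
      calc (0:EReal) = 0 + 0 := by simp
        _ ≤ L l + (lam p z.2 : EReal) := add_le_add ih (EReal.coe_ennreal_nonneg _)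
        _ ≤ L (l ++ [(z.1, z.2)]) := h1
  have hlamfin : ∀ (τ : List (X × Bool)) (x : X) (y : Bool), lam (F τ x) y ≠ ⊤ := by
    intro τ x y
    cases y
    · exact hloss.finite0 _ (hF τ x)
    · exact hloss.finite1 _ (hF τ x)
  have hlogfin : ∀ (τ : List (X × Bool)) (x : X) (y : Bool), logLoss (F τ x) y ≠ ⊤ := by
    intro τ x y
    have h := hF τ x
    cases y <;> simp [logLoss, h.1.ne', h.2.ne]
  constructor
  · show (η : EReal) * L [] + cumLoss logLoss F [] - (η : EReal) * cumLoss lam F [] = 0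
    have hc1 : cumLoss logLoss F ([] : List (X × Bool)) = 0 := by simp [cumLoss]
    have hc2 : cumLoss lam F ([] : List (X × Bool)) = 0 := by simp [cumLoss]
    rw [hL0, hc1, hc2]
    simp
  · intro σ x
    obtain ⟨p, hp, hstep⟩ := hLstep σ x
    have hfio : F σ x ∈ Ioo (0:ℝ) 1 := hF σ x
    set f : ℝ := F σ x with hf_def
    have hf0 : 0 < f := hfio.1
    have hf1 : f < 1 := hfio.2
    set a : ℝ := expNeg (ENNReal.ofReal η * lam p false) with ha_def
    set b : ℝ := expNeg (ENNReal.ofReal η * lam p true) with hb_def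
    set A : ℝ := expNeg (ENNReal.ofReal η * lam f false) with hA_def
    set B : ℝ := expNeg (ENNReal.ofReal η * lam f true) with hB_def
    have hlf0 : lam f false ≠ ⊤ := hloss.finite0 f hfio
    have hlf1 : lam f true ≠ ⊤ := hloss.finite1 f hfio
    set r0 : ℝ := (lam f false).toReal with hr0_def
    set r1 : ℝ := (lam f true).toReal with hr1_def
    have hAe : A = Real.exp (-(η * r0)) := expNeg_eta hη hlf0
    have hBe : B = Real.exp (-(η * r1)) := expNeg_eta hη hlf1
    have hApos : 0 < A := hAe ▸ Real.exp_pos _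
    have hBpos : 0 < B := hBe ▸ Real.exp_pos _
    have ha0 : 0 ≤ a := expNeg_nonneg' _
    have hb0 : 0 ≤ b := expNeg_nonneg' _
    have key : f * b / B + (1 - f) * a / A ≤ 1 :=
      keyIneq lam η hη hloss hproper hmix hfio hp
    set g : ℝ := f * b / B with hg_def
    have hg0 : 0 ≤ g := by
      rw [hg_def]
      exact div_nonneg (mul_nonneg hf0.le hb0) hBpos.le
    have haA0 : 0 ≤ (1 - f) * a / A :=
      div_nonneg (mul_nonneg (by linarith) ha0) hApos.le
    have hg1 : g ≤ 1 := by linarith only [key, haA0]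
    have h1g : (1 - f) * a / A ≤ 1 - g := by linarith only [key]
    refine ⟨g, ⟨hg0, hg1⟩, ?_⟩
    intro y
    show (η : EReal) * L (σ ++ [(x, y)]) + cumLoss logLoss F (σ ++ [(x, y)])
          - (η : EReal) * cumLoss lam F (σ ++ [(x, y)])
        ≥ ((η : EReal) * L σ + cumLoss logLoss F σ - (η : EReal) * cumLoss lam F σ)
          + (logLoss g y : EReal)
    obtain ⟨c, hc0, hcEq⟩ := cumLoss_eq_coe lam F σ hlamfin
    obtain ⟨d, hd0, hdEq⟩ := cumLoss_eq_coe logLoss F σ hlogfin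
    rw [cumLoss_append', cumLoss_append', hcEq, hdEq, ← hf_def]
    have hlfy : lam f y ≠ ⊤ := by cases y; exacts [hlf0, hlf1]
    set ry : ℝ := (lam f y).toReal with hry_def
    have hry0 : 0 ≤ ry := ENNReal.toReal_nonneg
    have hlamfyE : ((lam f y : ENNReal) : EReal) = ((ry : ℝ) : EReal) :=
      ennreal_coe_eq_coe_toReal hlfy
    set lgy : ℝ := (if y then -Real.log f else -Real.log (1 - f) : ℝ) with hlgy_def
    have hlogf_le : Real.log f ≤ 0 := Real.log_nonpos hf0.le hf1.le
    have hlog1f_le : Real.log (1 - f) ≤ 0 := Real.log_nonpos (by linarith) (by linarith)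
    have hlogfyE : ((logLoss f y : ENNReal) : EReal) = ((lgy : ℝ) : EReal) := by
      rw [hlgy_def]
      cases y
      · simp only [logLoss, Bool.false_eq_true, if_false, hf1.ne, ite_false]
        rw [EReal.coe_ennreal_ofReal]
        norm_cast
        exact max_eq_left (by linarith)
      · simp only [logLoss, if_true, hf0.ne', ite_false]
        rw [EReal.coe_ennreal_ofReal]
        norm_cast
        exact max_eq_left (by linarith)
    rw [hlamfyE, hlogfyE]
    by_cases htop : L (σ ++ [(x, y)]) = ⊤
    · rw [htop]
      have h1 : (η : EReal) * (⊤ : EReal) = ⊤ := EReal.coe_mul_top_of_pos hη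
      rw [h1, ← EReal.coe_add, ← EReal.coe_add, ← EReal.coe_mul, EReal.top_add_coe,
        EReal.top_sub_coe]
      exact le_top
    · -- finite case
      have hstepy := hstep y
      have hsum_ne : L σ + ((lam p y : ENNReal) : EReal) ≠ ⊤ := by
        intro h
        exact htop (top_le_iff.mp (h ▸ hstepy))
      have hLσbot : L σ ≠ ⊥ := fun hb => by simpa [hb] using hLnn σ
      have hLσ_ne : L σ ≠ ⊤ := by
        intro h
        rw [h, EReal.top_add_of_ne_bot (EReal.coe_ennreal_ne_bot _)] at hsum_ne
        exact hsum_ne rfl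
      have hlampy : lam p y ≠ ⊤ := by
        intro h
        rw [h, EReal.coe_ennreal_top, EReal.add_top_of_ne_bot hLσbot] at hsum_ne
        exact hsum_ne rfl
      set ls : ℝ := (L σ).toReal with hls_def
      have hLσE : L σ = (ls : EReal) := (EReal.coe_toReal hLσ_ne hLσbot).symm
      set ls' : ℝ := (L (σ ++ [(x, y)])).toReal with hls'_def
      have hLσ'E : L (σ ++ [(x, y)]) = (ls' : EReal) :=
        (EReal.coe_toReal htop
          (fun hb => by simpa [hb] using hLnn (σ ++ [(x, y)]))).symm
      set ppy : ℝ := (lam p y).toReal with hppy_def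
      have hppy0 : 0 ≤ ppy := ENNReal.toReal_nonneg
      have hlampyE : ((lam p y : ENNReal) : EReal) = ((ppy : ℝ) : EReal) :=
        ennreal_coe_eq_coe_toReal hlampy
      rw [hLσE, hLσ'E, hlampyE] at hstepy
      rw [hLσE, hLσ'E]
      have hlsR : ls + ppy ≤ ls' := by exact_mod_cast hstepy
      have hexp : expNeg (ENNReal.ofReal η * lam p y) = Real.exp (-(η * ppy)) :=
        expNeg_eta hη hlampy
      -- pointwise log-loss inequality
      have hloggy : (logLoss g y : EReal) ≤ ((η * ppy + lgy - η * ry : ℝ) : EReal) := by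
        cases y
        · -- y = false
          have hryr0 : ry = r0 := by rw [hry_def, hr0_def]
          have hlgyv : lgy = -Real.log (1 - f) := by rw [hlgy_def]; simp
          have hapos : 0 < a := by rw [ha_def, hexp]; exact Real.exp_pos _
          have hbApos : 0 < (1 - f) * a / A := div_pos (mul_pos (by linarith) hapos) hApos
          have h1gpos : 0 < 1 - g := lt_of_lt_of_le hbApos h1g
          have hlog : Real.log ((1 - f) * a / A) ≤ Real.log (1 - g) :=
            Real.log_le_log hbApos h1g
          have hla : Real.log a = -(η * ppy) := by rw [ha_def, hexp, Real.log_exp]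
          have hlA : Real.log A = -(η * r0) := by rw [hAe, Real.log_exp]
          have hlval : Real.log ((1 - f) * a / A)
              = Real.log (1 - f) + Real.log a - Real.log A := by
            rw [Real.log_div (mul_pos (by linarith : (0:ℝ) < 1 - f) hapos).ne' hApos.ne',
              Real.log_mul (by linarith) hapos.ne']
          have hlog1g : Real.log (1 - g) ≤ 0 := Real.log_nonpos (by linarith) (by linarith)
          have hll : logLoss g false = ENNReal.ofReal (-Real.log (1 - g)) := by
            simp [logLoss, show g ≠ 1 by intro h; rw [h] at h1gpos; linarith]
          rw [hll, EReal.coe_ennreal_ofReal]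
          have hmax : max (-Real.log (1 - g)) 0 = -Real.log (1 - g) :=
            max_eq_left (by linarith)
          rw [hmax]
          apply EReal.coe_le_coe_iff.mpr
          rw [hryr0, hlgyv]
          linarith only [hlog, hla, hlA, hlval]
        · -- y = true
          have hryr1 : ry = r1 := by rw [hry_def, hr1_def]
          have hlgyv : lgy = -Real.log f := by rw [hlgy_def]; simp
          have hbpos : 0 < b := by rw [hb_def, hexp]; exact Real.exp_pos _
          have hgpos : 0 < g := by
            rw [hg_def]
            exact div_pos (mul_pos hf0 hbpos) hBpos
          have hlb : Real.log b = -(η * ppy) := by rw [hb_def, hexp, Real.log_exp]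
          have hlB : Real.log B = -(η * r1) := by rw [hBe, Real.log_exp]
          have hlval : Real.log g = Real.log f + Real.log b - Real.log B := by
            rw [hg_def, Real.log_div (mul_pos hf0 hbpos).ne' hBpos.ne',
              Real.log_mul hf0.ne' hbpos.ne']
          have hlogg : Real.log g ≤ 0 := Real.log_nonpos hgpos.le hg1
          have hll : logLoss g true = ENNReal.ofReal (-Real.log g) := by
            simp [logLoss, hgpos.ne']
          rw [hll, EReal.coe_ennreal_ofReal]
          have hmax : max (-Real.log g) 0 = -Real.log g := max_eq_left (by linarith)
          rw [hmax]
          apply EReal.coe_le_coe_iff.mpr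
          rw [hryr1, hlgyv]
          linarith only [hlb, hlB, hlval]
      -- assemble
      have eR : (η : EReal) * (ls : EReal) + (d : EReal) - (η : EReal) * (c : EReal)
          = ((η * ls + d - η * c : ℝ) : EReal) := by norm_cast
      have eL : (η : EReal) * (ls' : EReal) + ((d : EReal) + (lgy : EReal))
            - (η : EReal) * ((c : EReal) + (ry : EReal))
          = ((η * ls' + (d + lgy) - η * (c + ry) : ℝ) : EReal) := by norm_cast
      rw [eL, eR]
      have hfinal : ((η * ls + d - η * c : ℝ) : EReal)
            + ((η * ppy + lgy - η * ry : ℝ) : EReal)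
          ≤ ((η * ls' + (d + lgy) - η * (c + ry) : ℝ) : EReal) := by
        rw [← EReal.coe_add]
        apply EReal.coe_le_coe_iff.mpr
        nlinarith [mul_le_mul_of_nonneg_left hlsR hη.le]
      exact le_trans (add_le_add_right hloggy _) hfinal
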